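/- arXiv:2209.01116 — 6 statements merged into one kernel-verified Lean document; each statement's English description precedes it below -/
import Mathlib

section
/- For every η > 0 there is γ > 0 such that for all n the following holds. Let G be an n-vertex graph with δ(G) ≥ (1/2 - γ)·n and α(G) < (1/2 - η)·n, and let c : V(G) → ℝ_{≥0} be a weight function such that c(u) + c(v) ≥ 1 for every edge uv of G. Then ∑_{v ∈ V(G)} c(v) ≥ n/2. -/
open Finset

/-- Base case `k = 2` of the fractional covering claim: for every `η > 0` there is
`γ > 0` such that in any `n`-vertex graph with minimum degree at least `(1/2-γ)n`
and independence number less than `(1/2-η)n`, any nonnegative vertex weighting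
with `c(u)+c(v) ≥ 1` on every edge has total weight at least `n/2`. -/
theorem fractional_cover_k_two {η : ℝ} (hη : 0 < η) :
    ∃ γ : ℝ, 0 < γ ∧
      ∀ (n : ℕ) (V : Type) [Fintype V] [DecidableEq V]
        (G : SimpleGraph V) [DecidableRel G.Adj],
        Fintype.card V = n →
        (∀ v : V, (1 / 2 - γ) * n ≤ (G.degree v : ℝ)) →
        (∀ I : Finset V, (∀ a ∈ I, ∀ b ∈ I, ¬ G.Adj a b) →
          (I.card : ℝ) < (1 / 2 - η) * n) →
        ∀ c : V → ℝ, (∀ v, 0 ≤ c v) →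
          (∀ u v : V, G.Adj u v → 1 ≤ c u + c v) →
          (n : ℝ) / 2 ≤ ∑ v, c v := by
  refine ⟨η / 2, by positivity, ?_⟩
  intro n V _ _ G _ hcard hdeg hind c hc0 hce
  classical
  by_cases hall : ∀ v : V, (1:ℝ)/2 ≤ c v
  · have h : (n:ℝ)/2 = ∑ _v : V, (1:ℝ)/2 := by
      rw [Finset.sum_const, Finset.card_univ, hcard, nsmul_eq_mul]; ring
    rw [h]
    exact Finset.sum_le_sum fun v _ => hall v
  push_neg at hall
  obtain ⟨w, hw⟩ := hall
  obtain ⟨v0, -, hmin⟩ := Finset.exists_min_image Finset.univ c ⟨w, mem_univ w⟩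
  set m := c v0 with hm
  have hm2 : m < 1/2 := lt_of_le_of_lt (hmin w (mem_univ w)) hw
  have hm0 : 0 ≤ m := hc0 v0
  set A := G.neighborFinset v0 with hA
  set S := Finset.univ.filter (fun v => c v < 1/2) with hS
  set R := (Finset.univ \ A) \ S with hR
  have hSsub : S ⊆ Finset.univ \ A := by
    intro v hv
    simp only [hS, mem_filter] at hv
    simp only [mem_sdiff, mem_univ, true_and, hA, SimpleGraph.mem_neighborFinset]
    intro hadj
    have := hce v0 v hadj
    linarith [hv.2]
  have hsplit : ∑ v, c v = ∑ v ∈ A, c v + (∑ v ∈ S, c v + ∑ v ∈ R, c v) := by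
    rw [← Finset.sum_sdiff (Finset.subset_univ A), ← Finset.sum_sdiff hSsub]
    ring
  have hcards : (n:ℝ) = A.card + S.card + R.card := by
    have h1 : (Finset.univ \ A).card + A.card = n := by
      rw [Finset.card_sdiff_add_card_eq_card (Finset.subset_univ A), Finset.card_univ, hcard]
    have h2 : R.card + S.card = (Finset.univ \ A).card := by
      rw [hR, Finset.card_sdiff_add_card_eq_card hSsub]
    push_cast [← h1, ← h2]
    ring
  have hAsum : (1 - m) * A.card ≤ ∑ v ∈ A, c v := by
    have h : ∑ _v ∈ A, (1 - m) ≤ ∑ v ∈ A, c v :=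
      Finset.sum_le_sum fun v hv => by
        have hadj : G.Adj v0 v := by
          simpa [hA, SimpleGraph.mem_neighborFinset] using hv
        have := hce v0 v hadj
        linarith
    rw [Finset.sum_const, nsmul_eq_mul] at h
    linarith
  have hSsum : m * S.card ≤ ∑ v ∈ S, c v := by
    have h : ∑ _v ∈ S, m ≤ ∑ v ∈ S, c v :=
      Finset.sum_le_sum fun v _ => hmin v (mem_univ v)
    simpa [Finset.sum_const, nsmul_eq_mul, mul_comm] using h
  have hRsum : (1/2 : ℝ) * R.card ≤ ∑ v ∈ R, c v := by
    have h : ∑ _v ∈ R, (1/2 : ℝ) ≤ ∑ v ∈ R, c v :=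
      Finset.sum_le_sum fun v hv => by
        simp only [hR, hS, mem_sdiff, mem_filter, mem_univ, true_and, not_lt] at hv
        exact hv.2
    simpa [Finset.sum_const, nsmul_eq_mul, mul_comm] using h
  have hScard : (S.card : ℝ) < (1/2 - η) * n := by
    refine hind S ?_
    intro a ha b hb hab
    simp only [hS, mem_filter] at ha hb
    have := hce a b hab
    linarith [ha.2, hb.2]
  have hAcard : (1/2 - η/2) * n ≤ (A.card : ℝ) := by
    have h := hdeg v0
    rw [hA, SimpleGraph.card_neighborFinset_eq_degree]
    exact h
  have hn0 : (0:ℝ) ≤ n := Nat.cast_nonneg n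
  have hAS : (S.card : ℝ) ≤ (A.card : ℝ) := by nlinarith
  rw [hsplit]
  nlinarith [hAsum, hSsum, hRsum, hcards, hAS, hm2, hm0]
end

section
/- Let k ≥ 3 and γ with 0 < γ < 1/(2(k-1)^2). Let G be an n-vertex graph with δ(G) ≥ ((k-1)/k - γ)·n and α(G) < (1/k - (k-1)·γ)·n. Then any two distinct vertices u, v of G have a copy of K_{k-1} in their common neighbourhood; in particular u and v each extend this clique to a k-clique of G. -/
open Finset

/-- Under the stability hypotheses, any two distinct vertices have a copy of
`K_{k-1}` in their common neighbourhood; in particular each of them extends it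
to a `k`-clique. -/
theorem common_nbhd_contains_clique
    {k n : ℕ} (hk : 3 ≤ k) {γ : ℝ} (hγ0 : 0 < γ)
    (hγ1 : γ < 1 / (2 * ((k : ℝ) - 1) ^ 2))
    {V : Type*} [Fintype V] [DecidableEq V]
    (G : SimpleGraph V) [DecidableRel G.Adj] (hcard : Fintype.card V = n)
    (hmin : ∀ v : V, (((k : ℝ) - 1) / (k : ℝ) - γ) * n ≤ (G.degree v : ℝ))
    (hα : ∀ I : Finset V, (∀ a ∈ I, ∀ b ∈ I, ¬ G.Adj a b) →
      (I.card : ℝ) < (1 / (k : ℝ) - ((k : ℝ) - 1) * γ) * n)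
    (u v : V) (huv : u ≠ v) :
    ∃ s : Finset V, (∀ w ∈ s, G.Adj u w ∧ G.Adj v w) ∧
      G.IsNClique (k - 1) s ∧
      G.IsNClique k (insert u s) ∧ G.IsNClique k (insert v s) := by
  classical
  set K : ℝ := (k : ℝ) with hK
  have hK3 : (3 : ℝ) ≤ K := by rw [hK]; exact_mod_cast hk
  have hKpos : (0 : ℝ) < K := by linarith
  have hK1 : (0 : ℝ) < K - 1 := by linarith
  -- γ is small: K*(K-1)*γ < 1
  have hγsmall : K * ((K - 1) * γ) < 1 := by
    have h1 : γ * (2 * (K - 1) ^ 2) < 1 := by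
      rw [one_div] at hγ1
      have h2 : (0:ℝ) < 2 * (K - 1) ^ 2 := by positivity
      calc γ * (2 * (K - 1) ^ 2) < (2 * (K - 1) ^ 2)⁻¹ * (2 * (K - 1) ^ 2) := by
            exact mul_lt_mul_of_pos_right hγ1 h2
        _ = 1 := by field_simp
    nlinarith [hγ0, hK1]
  have hn : 0 < n := by
    rw [← hcard]; exact Fintype.card_pos_iff.mpr ⟨u⟩
  have hnR : (0 : ℝ) < n := by exact_mod_cast hn
  -- the common neighbourhood operator
  let T : Finset V → Finset V := fun c =>
    Finset.univ.filter fun x => G.Adj u x ∧ G.Adj v x ∧ ∀ w ∈ c, G.Adj w x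
  have hTmem : ∀ c x, x ∈ T c ↔ G.Adj u x ∧ G.Adj v x ∧ ∀ w ∈ c, G.Adj w x := by
    intro c x; simp [T]
  -- size of intersection of two finsets
  have hinter : ∀ A B : Finset V, (A.card : ℝ) + B.card - n ≤ ((A ∩ B).card : ℝ) := by
    intro A B
    have h1 : (A ∩ B).card + (A ∪ B).card = A.card + B.card :=
      Finset.card_inter_add_card_union A B
    have h2 : (A ∪ B).card ≤ n := by
      rw [← hcard]; exact Finset.card_le_univ _
    have h1' : ((A ∩ B).card : ℝ) + (A ∪ B).card = A.card + B.card := by exact_mod_cast h1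
    have h2' : ((A ∪ B).card : ℝ) ≤ n := by exact_mod_cast h2
    linarith
  -- the iterative construction
  have key : ∀ j, j ≤ k - 3 → ∃ c : Finset V, c.card = j ∧
      (∀ w ∈ c, G.Adj u w ∧ G.Adj v w) ∧ G.IsClique c ∧
      (((j : ℝ) + 2) * ((K - 1) / K - γ) - ((j : ℝ) + 1)) * n ≤ ((T c).card : ℝ) := by
    intro j
    induction j with
    | zero =>
      intro _
      refine ⟨∅, rfl, by simp, by simp, ?_⟩
      have hsub : G.neighborFinset u ∩ G.neighborFinset v ⊆ T ∅ := by
        intro x hx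
        simp only [Finset.mem_inter, SimpleGraph.mem_neighborFinset] at hx
        rw [hTmem]; exact ⟨hx.1, hx.2, by simp⟩
      have h1 := hinter (G.neighborFinset u) (G.neighborFinset v)
      have h2 : ((G.neighborFinset u ∩ G.neighborFinset v).card : ℝ) ≤ (T ∅).card := by
        exact_mod_cast Finset.card_le_card hsub
      have hdu := hmin u
      have hdv := hmin v
      rw [SimpleGraph.degree] at hdu hdv
      push_cast
      nlinarith [hdu, hdv, h1, h2]
    | succ j ih =>
      intro hj
      obtain ⟨c, hc, hadj, hclq, hbd⟩ := ih (Nat.le_of_succ_le hj)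
      -- the current common neighbourhood is nonempty
      have hjK : (j : ℝ) + 3 ≤ K := by
        have : j + 3 ≤ k := by omega
        rw [hK]; exact_mod_cast this
      have hpos : (0 : ℝ) < (((j : ℝ) + 2) * ((K - 1) / K - γ) - ((j : ℝ) + 1)) * n := by
        have h1 : ((j : ℝ) + 2) * (K - 1) - ((j : ℝ) + 1) * K = K - (j : ℝ) - 2 := by ring
        have h2 : ((j : ℝ) + 2) * γ ≤ (K - 1) * γ := by nlinarith
        have h3 : (0 : ℝ) < ((j : ℝ) + 2) * ((K - 1) / K - γ) - ((j : ℝ) + 1) := by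
          rw [show ((j : ℝ) + 2) * ((K - 1) / K - γ) - ((j : ℝ) + 1)
            = (((j : ℝ) + 2) * (K - 1) - ((j : ℝ) + 2) * γ * K - ((j : ℝ) + 1) * K) / K by
              field_simp]
          apply div_pos _ hKpos
          nlinarith
        positivity
      have hTne : (T c).Nonempty := by
        rw [← Finset.card_pos]
        rcases Nat.eq_zero_or_pos (T c).card with h | h
        · rw [h] at hbd; push_cast at hbd; linarith
        · exact h
      obtain ⟨x, hx⟩ := hTne
      rw [hTmem] at hx
      obtain ⟨hxu, hxv, hxc⟩ := hx
      have hxnc : x ∉ c := fun h => G.irrefl (hxc x h)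
      refine ⟨insert x c, ?_, ?_, ?_, ?_⟩
      · rw [Finset.card_insert_of_notMem hxnc, hc]
      · intro w hw
        rcases Finset.mem_insert.mp hw with h | h
        · subst h; exact ⟨hxu, hxv⟩
        · exact hadj w h
      · rw [Finset.coe_insert]
        exact hclq.insert fun b hb _ => (hxc b hb).symm
      · -- T (insert x c) = T c ∩ N(x)
        have hEq : T (insert x c) = T c ∩ G.neighborFinset x := by
          ext y
          simp only [hTmem, Finset.mem_inter, SimpleGraph.mem_neighborFinset,
            Finset.mem_insert]
          constructor
          · rintro ⟨h1, h2, h3⟩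
            exact ⟨⟨h1, h2, fun w hw => h3 w (Or.inr hw)⟩, h3 x (Or.inl rfl)⟩
          · rintro ⟨⟨h1, h2, h3⟩, h4⟩
            exact ⟨h1, h2, fun w hw => hw.elim (fun h => h ▸ h4) (h3 w)⟩
        have h1 := hinter (T c) (G.neighborFinset x)
        have hdx := hmin x
        rw [SimpleGraph.degree] at hdx
        rw [hEq]
        push_cast
        nlinarith [hbd, h1, hdx]
  -- apply at j = k - 3
  obtain ⟨c, hc, hadj, hclq, hbd⟩ := key (k - 3) le_rfl
  have hcast : ((k - 3 : ℕ) : ℝ) = K - 3 := by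
    rw [hK]; push_cast [Nat.cast_sub hk]; ring
  have hbd' : (1 / K - (K - 1) * γ) * n ≤ ((T c).card : ℝ) := by
    rw [hcast] at hbd
    have : ((K - 3) + 2) * ((K - 1) / K - γ) - ((K - 3) + 1) = 1 / K - (K - 1) * γ := by
      field_simp
      ring
    rw [this] at hbd
    exact hbd
  -- T c contains an edge
  have hedge : ∃ a ∈ T c, ∃ b ∈ T c, G.Adj a b := by
    by_contra h
    push_neg at h
    have := hα (T c) h
    linarith
  obtain ⟨a, ha, b, hb, hab⟩ := hedge
  rw [hTmem] at ha hb
  obtain ⟨hau, hav, hac⟩ := ha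
  obtain ⟨hbu, hbv, hbc⟩ := hb
  have hbnc : b ∉ c := fun h => G.irrefl (hbc b h)
  have hanotin : a ∉ insert b c := by
    intro h
    rcases Finset.mem_insert.mp h with h | h
    · exact hab.ne h
    · exact G.irrefl (hac a h)
  -- the clique s
  refine ⟨insert a (insert b c), ?_, ?_, ?_, ?_⟩
  · intro w hw
    rcases Finset.mem_insert.mp hw with h | h
    · subst h; exact ⟨hau, hav⟩
    rcases Finset.mem_insert.mp h with h | h
    · subst h; exact ⟨hbu, hbv⟩
    · exact hadj w h
  all_goals {
    have hclq1 : G.IsNClique (k - 3) c := ⟨hclq, hc⟩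
    have hclq2 : G.IsNClique (k - 3 + 1) (insert b c) :=
      hclq1.insert fun w hw => (hbc w hw).symm
    have hclq3 : G.IsNClique (k - 3 + 2) (insert a (insert b c)) := by
      refine hclq2.insert fun w hw => ?_
      rcases Finset.mem_insert.mp hw with h | h
      · subst h; exact hab
      · exact (hac w h).symm
    first
    | exact (show k - 3 + 2 = k - 1 by omega) ▸ hclq3
    | · have hu : G.IsNClique (k - 3 + 2 + 1) (insert u (insert a (insert b c))) := by
          refine hclq3.insert fun w hw => ?_
          rcases Finset.mem_insert.mp hw with h | h
          · subst h; exact hau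
          rcases Finset.mem_insert.mp h with h | h
          · subst h; exact hbu
          · exact (hadj w h).1
        exact (show k - 3 + 2 + 1 = k by omega) ▸ hu
    | · have hv : G.IsNClique (k - 3 + 2 + 1) (insert v (insert a (insert b c))) := by
          refine hclq3.insert fun w hw => ?_
          rcases Finset.mem_insert.mp hw with h | h
          · subst h; exact hav
          rcases Finset.mem_insert.mp h with h | h
          · subst h; exact hbv
          · exact (hadj w h).2
        exact (show k - 3 + 2 + 1 = k by omega) ▸ hv
  }
end

section
/- Let 0 < ε < d_{12}, d_{13}, d_{23} ≤ 1 and let Γ be a tripartite graph with parts V¹, V², V³ of size n such that (Vⁱ, Vʲ) is ε-regular with density d_{ij} for all 1 ≤ i < j ≤ 3. Then for all X_i ⊆ Vⁱ with |X_i| ≥ εn (i = 1,2,3), the number of triangles of Γ with one vertex in each X_i equals d_{12}·d_{13}·d_{23}·|X₁||X₂||X₃| up to an additive error of at most 10εn³. -/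
open Finset

/-- The number of edges between two disjoint vertex sets. -/
def edgeCount {V : Type*} [DecidableEq V] (G : SimpleGraph V) [DecidableRel G.Adj]
    (X Y : Finset V) : ℕ :=
  ∑ x ∈ X, (Y.filter (G.Adj x)).card

/-- The edge density between two disjoint vertex sets. -/
noncomputable def density {V : Type*} [DecidableEq V] (G : SimpleGraph V)
    [DecidableRel G.Adj] (X Y : Finset V) : ℝ :=
  (edgeCount G X Y : ℝ) / ((X.card : ℝ) * (Y.card : ℝ))

/-- `(A,B)` is an `ε`-regular pair of density `d`. -/
def IsRegularPair {V : Type*} [DecidableEq V] (G : SimpleGraph V) [DecidableRel G.Adj]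
    (ε d : ℝ) (A B : Finset V) : Prop :=
  density G A B = d ∧
    ∀ X ⊆ A, ∀ Y ⊆ B,
      ε * (A.card : ℝ) ≤ (X.card : ℝ) → ε * (B.card : ℝ) ≤ (Y.card : ℝ) →
      |density G X Y - d| < ε

section Aux
variable {V : Type*} [DecidableEq V] (G : SimpleGraph V) [DecidableRel G.Adj]

lemma edgeCount_cast (X Y : Finset V) :
    (edgeCount G X Y : ℝ) = ∑ x ∈ X, ((Y.filter (G.Adj x)).card : ℝ) := by
  simp [edgeCount]

lemma edgeCount_le (X Y : Finset V) : (edgeCount G X Y : ℝ) ≤ (X.card : ℝ) * Y.card := by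
  rw [edgeCount_cast]
  calc ∑ x ∈ X, ((Y.filter (G.Adj x)).card : ℝ) ≤ ∑ _x ∈ X, (Y.card : ℝ) :=
        sum_le_sum fun x _ => by exact_mod_cast card_filter_le _ _
    _ = (X.card : ℝ) * Y.card := by rw [sum_const, nsmul_eq_mul]

lemma regular_edge_bound {ε d : ℝ} {A B X Y : Finset V}
    (hreg : IsRegularPair G ε d A B) (hX : X ⊆ A) (hY : Y ⊆ B)
    (hXc : ε * (A.card : ℝ) ≤ (X.card : ℝ)) (hYc : ε * (B.card : ℝ) ≤ (Y.card : ℝ))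
    (hX0 : 0 < X.card) (hY0 : 0 < Y.card) :
    |(edgeCount G X Y : ℝ) - d * ((X.card : ℝ) * Y.card)| < ε * ((X.card : ℝ) * Y.card) := by
  have h := hreg.2 X hX Y hY hXc hYc
  have hpos : (0:ℝ) < (X.card : ℝ) * Y.card := by positivity
  have key : (edgeCount G X Y : ℝ) - d * ((X.card : ℝ) * Y.card)
      = (density G X Y - d) * ((X.card:ℝ) * Y.card) := by
    rw [density, sub_mul, div_mul_cancel₀ _ (ne_of_gt hpos)]
  rw [key, abs_mul, abs_of_pos hpos]
  exact mul_lt_mul_of_pos_right h hpos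

lemma bad_low_card {ε d : ℝ} {A B Y : Finset V} (hreg : IsRegularPair G ε d A B)
    (hY : Y ⊆ B) (hYc : ε * (B.card : ℝ) ≤ (Y.card : ℝ)) (hε : 0 < ε)
    (hA0 : 0 < A.card) (hY0 : 0 < Y.card) (X : Finset V) (hX : X ⊆ A) :
    (((X.filter (fun x => ((Y.filter (G.Adj x)).card : ℝ) ≤ (d - ε) * Y.card)).card : ℝ))
      < ε * A.card := by
  by_contra hcon
  push_neg at hcon
  set Bd := X.filter (fun x => ((Y.filter (G.Adj x)).card : ℝ) ≤ (d - ε) * Y.card) with hBd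
  have hsub : Bd ⊆ A := (filter_subset _ _).trans hX
  have hBd0 : (0:ℝ) < (Bd.card : ℝ) := lt_of_lt_of_le (by positivity) hcon
  have hY0' : (0:ℝ) < (Y.card : ℝ) := by positivity
  have hdens := hreg.2 Bd hsub Y hY hcon hYc
  have he : (edgeCount G Bd Y : ℝ) ≤ (Bd.card : ℝ) * ((d - ε) * Y.card) := by
    rw [edgeCount_cast]
    calc ∑ x ∈ Bd, ((Y.filter (G.Adj x)).card : ℝ) ≤ ∑ x ∈ Bd, (d - ε) * Y.card :=
          sum_le_sum fun x hx => (mem_filter.mp hx).2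
      _ = (Bd.card : ℝ) * ((d - ε) * Y.card) := by rw [sum_const, nsmul_eq_mul]
  have hdle : density G Bd Y ≤ d - ε := by
    rw [density, div_le_iff₀ (mul_pos hBd0 hY0')]
    calc (edgeCount G Bd Y : ℝ) ≤ (Bd.card : ℝ) * ((d - ε) * Y.card) := he
      _ = (d - ε) * ((Bd.card : ℝ) * Y.card) := by ring
  rw [abs_lt] at hdens
  linarith [hdens.1]

lemma bad_high_card {ε d : ℝ} {A B Y : Finset V} (hreg : IsRegularPair G ε d A B)
    (hY : Y ⊆ B) (hYc : ε * (B.card : ℝ) ≤ (Y.card : ℝ)) (hε : 0 < ε)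
    (hA0 : 0 < A.card) (hY0 : 0 < Y.card) (X : Finset V) (hX : X ⊆ A) :
    (((X.filter (fun x => (d + ε) * Y.card ≤ ((Y.filter (G.Adj x)).card : ℝ))).card : ℝ))
      < ε * A.card := by
  by_contra hcon
  push_neg at hcon
  set Bd := X.filter (fun x => (d + ε) * Y.card ≤ ((Y.filter (G.Adj x)).card : ℝ)) with hBd
  have hsub : Bd ⊆ A := (filter_subset _ _).trans hX
  have hBd0 : (0:ℝ) < (Bd.card : ℝ) := lt_of_lt_of_le (by positivity) hcon
  have hY0' : (0:ℝ) < (Y.card : ℝ) := by positivity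
  have hdens := hreg.2 Bd hsub Y hY hcon hYc
  have he : (Bd.card : ℝ) * ((d + ε) * Y.card) ≤ (edgeCount G Bd Y : ℝ) := by
    rw [edgeCount_cast]
    calc (Bd.card : ℝ) * ((d + ε) * Y.card) = ∑ x ∈ Bd, (d + ε) * Y.card := by
          rw [sum_const, nsmul_eq_mul]
      _ ≤ ∑ x ∈ Bd, ((Y.filter (G.Adj x)).card : ℝ) :=
          sum_le_sum fun x hx => (mem_filter.mp hx).2
  have hdle : d + ε ≤ density G Bd Y := by
    rw [density, le_div_iff₀ (mul_pos hBd0 hY0')]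
    calc (d + ε) * ((Bd.card : ℝ) * Y.card) = (Bd.card : ℝ) * ((d + ε) * Y.card) := by ring
      _ ≤ (edgeCount G Bd Y : ℝ) := he
  rw [abs_lt] at hdens
  linarith [hdens.2]

lemma triangle_count_eq (X₁ X₂ X₃ : Finset V) :
    ((X₁ ×ˢ X₂ ×ˢ X₃).filter
        (fun p => G.Adj p.1 p.2.1 ∧ G.Adj p.1 p.2.2 ∧ G.Adj p.2.1 p.2.2)).card
      = ∑ x ∈ X₁, edgeCount G (X₂.filter (G.Adj x)) (X₃.filter (G.Adj x)) := by
  simp only [card_filter, sum_product, edgeCount, sum_filter, card_filter]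
  refine sum_congr rfl fun x₁ _ => sum_congr rfl fun x₂ _ => ?_
  by_cases h : G.Adj x₁ x₂ <;> simp [h, ite_and]

end Aux
set_option maxHeartbeats 1000000 in
/-- Triangle counting lemma in a tripartite graph with pairwise `ε`-regular parts. -/
theorem triangle_counting_lemma {V : Type*} [DecidableEq V]
    (G : SimpleGraph V) [DecidableRel G.Adj] {n : ℕ}
    {ε d12 d13 d23 : ℝ} (hε : 0 < ε)
    (h12 : ε < d12) (h13 : ε < d13) (h23 : ε < d23)
    (hd12 : d12 ≤ 1) (hd13 : d13 ≤ 1) (hd23 : d23 ≤ 1)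
    (V₁ V₂ V₃ : Finset V)
    (hdisj12 : Disjoint V₁ V₂) (hdisj13 : Disjoint V₁ V₃) (hdisj23 : Disjoint V₂ V₃)
    (hc1 : V₁.card = n) (hc2 : V₂.card = n) (hc3 : V₃.card = n)
    (hreg12 : IsRegularPair G ε d12 V₁ V₂)
    (hreg13 : IsRegularPair G ε d13 V₁ V₃)
    (hreg23 : IsRegularPair G ε d23 V₂ V₃)
    (X₁ X₂ X₃ : Finset V) (hs1 : X₁ ⊆ V₁) (hs2 : X₂ ⊆ V₂) (hs3 : X₃ ⊆ V₃)
    (hx1 : ε * (n : ℝ) ≤ (X₁.card : ℝ)) (hx2 : ε * (n : ℝ) ≤ (X₂.card : ℝ))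
    (hx3 : ε * (n : ℝ) ≤ (X₃.card : ℝ)) :
    |(((X₁ ×ˢ X₂ ×ˢ X₃).filter
        (fun p => G.Adj p.1 p.2.1 ∧ G.Adj p.1 p.2.2 ∧ G.Adj p.2.1 p.2.2)).card : ℝ)
      - d12 * d13 * d23 * (X₁.card : ℝ) * (X₂.card : ℝ) * (X₃.card : ℝ)|
      ≤ 10 * ε * (n : ℝ) ^ 3 := by
  -- trivial case n = 0
  rcases Nat.eq_zero_or_pos n with hn | hn
  · subst hn
    have hV1 : V₁ = ∅ := card_eq_zero.mp hc1
    have hX1 : X₁ = ∅ := subset_empty.mp (hV1 ▸ hs1)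
    simp [hX1]
  have hn0 : (0:ℝ) < (n : ℝ) := by exact_mod_cast hn
  have hεn : (0:ℝ) < ε * n := mul_pos hε hn0
  have x1pos : (0:ℝ) < (X₁.card : ℝ) := lt_of_lt_of_le hεn hx1
  have x2pos : (0:ℝ) < (X₂.card : ℝ) := lt_of_lt_of_le hεn hx2
  have x3pos : (0:ℝ) < (X₃.card : ℝ) := lt_of_lt_of_le hεn hx3
  have x1le : (X₁.card : ℝ) ≤ n := by
    rw [← hc1]; exact_mod_cast card_le_card hs1
  have x2le : (X₂.card : ℝ) ≤ n := by
    rw [← hc2]; exact_mod_cast card_le_card hs2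
  have x3le : (X₃.card : ℝ) ≤ n := by
    rw [← hc3]; exact_mod_cast card_le_card hs3
  have hV10 : 0 < V₁.card := by rw [hc1]; exact hn
  have hV20 : 0 < V₂.card := by rw [hc2]; exact hn
  have hV30 : 0 < V₃.card := by rw [hc3]; exact hn
  have hX20 : 0 < X₂.card := by exact_mod_cast x2pos
  have hX30 : 0 < X₃.card := by exact_mod_cast x3pos
  have hx2' : ε * (V₂.card : ℝ) ≤ (X₂.card : ℝ) := by rw [hc2]; exact hx2
  have hx3' : ε * (V₃.card : ℝ) ≤ (X₃.card : ℝ) := by rw [hc3]; exact hx3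
  have hale : ∀ x : V, ((X₂.filter (G.Adj x)).card : ℝ) ≤ n := fun x =>
    le_trans (by exact_mod_cast card_le_card (filter_subset _ _)) x2le
  have hble : ∀ x : V, ((X₃.filter (G.Adj x)).card : ℝ) ≤ n := fun x =>
    le_trans (by exact_mod_cast card_le_card (filter_subset _ _)) x3le
  have ha0 : ∀ x : V, (0:ℝ) ≤ ((X₂.filter (G.Adj x)).card : ℝ) := fun x => Nat.cast_nonneg _
  have hb0 : ∀ x : V, (0:ℝ) ≤ ((X₃.filter (G.Adj x)).card : ℝ) := fun x => Nat.cast_nonneg _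
  -- Step A: per-vertex edge count bound
  have hEC : ∀ x ∈ X₁,
      |(edgeCount G (X₂.filter (G.Adj x)) (X₃.filter (G.Adj x)) : ℝ)
        - d23 * (((X₂.filter (G.Adj x)).card : ℝ) * ((X₃.filter (G.Adj x)).card : ℝ))|
        ≤ ε * (n:ℝ)^2 := by
    intro x _
    have hA2sub : X₂.filter (G.Adj x) ⊆ V₂ := (filter_subset _ _).trans hs2
    have hA3sub : X₃.filter (G.Adj x) ⊆ V₃ := (filter_subset _ _).trans hs3
    have hele : (edgeCount G (X₂.filter (G.Adj x)) (X₃.filter (G.Adj x)) : ℝ)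
        ≤ ((X₂.filter (G.Adj x)).card : ℝ) * ((X₃.filter (G.Adj x)).card : ℝ) :=
      edgeCount_le G _ _
    have he0 : (0:ℝ) ≤ (edgeCount G (X₂.filter (G.Adj x)) (X₃.filter (G.Adj x)) : ℝ) :=
      Nat.cast_nonneg _
    have habn : ((X₂.filter (G.Adj x)).card : ℝ) * ((X₃.filter (G.Adj x)).card : ℝ) ≤ (n:ℝ)^2 := by
      have := mul_le_mul (hale x) (hble x) (hb0 x) hn0.le
      linarith only [this]
    by_cases h2 : ε * (n:ℝ) ≤ ((X₂.filter (G.Adj x)).card : ℝ)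
    · by_cases h3 : ε * (n:ℝ) ≤ ((X₃.filter (G.Adj x)).card : ℝ)
      · have h2' : ε * (V₂.card : ℝ) ≤ ((X₂.filter (G.Adj x)).card : ℝ) := by rw [hc2]; exact h2
        have h3' : ε * (V₃.card : ℝ) ≤ ((X₃.filter (G.Adj x)).card : ℝ) := by rw [hc3]; exact h3
        have h2p : 0 < (X₂.filter (G.Adj x)).card := by
          have h : (0:ℝ) < ((X₂.filter (G.Adj x)).card : ℝ) := lt_of_lt_of_le hεn h2
          exact_mod_cast h
        have h3p : 0 < (X₃.filter (G.Adj x)).card := by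
          have h : (0:ℝ) < ((X₃.filter (G.Adj x)).card : ℝ) := lt_of_lt_of_le hεn h3
          exact_mod_cast h
        have hb := regular_edge_bound G hreg23 hA2sub hA3sub h2' h3' h2p h3p
        refine le_trans hb.le ?_
        exact mul_le_mul_of_nonneg_left habn hε.le
      · push_neg at h3
        have w1 := mul_le_mul_of_nonneg_left h3.le (ha0 x)
        have w2 := mul_le_mul_of_nonneg_right (hale x) hεn.le
        have w3 := mul_le_mul_of_nonneg_right hd23 (mul_nonneg (ha0 x) (hb0 x))
        have w4 : (0:ℝ) ≤ d23 := le_of_lt (lt_trans hε h23)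
        have w5 := mul_le_mul_of_nonneg_left (mul_nonneg (ha0 x) (hb0 x)) w4
        rw [abs_le]
        constructor <;> linarith only [hele, he0, w1, w2, w3, w5,
          mul_nonneg (ha0 x) (hb0 x)]
    · push_neg at h2
      have w1 := mul_le_mul_of_nonneg_left h2.le (hb0 x)
      have w2 := mul_le_mul_of_nonneg_right (hble x) hεn.le
      have w3 := mul_le_mul_of_nonneg_right hd23 (mul_nonneg (ha0 x) (hb0 x))
      have w4 : (0:ℝ) ≤ d23 := le_of_lt (lt_trans hε h23)
      have w5 := mul_le_mul_of_nonneg_left (mul_nonneg (ha0 x) (hb0 x)) w4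
      rw [abs_le]
      constructor <;> linarith only [hele, he0, w1, w2, w3, w5,
        mul_nonneg (ha0 x) (hb0 x)]
  -- Step B: bad vertex sets
  have hB2l := bad_low_card G hreg12 hs2 hx2' hε hV10 hX20 X₁ hs1
  have hB2h := bad_high_card G hreg12 hs2 hx2' hε hV10 hX20 X₁ hs1
  have hB3l := bad_low_card G hreg13 hs3 hx3' hε hV10 hX30 X₁ hs1
  have hB3h := bad_high_card G hreg13 hs3 hx3' hε hV10 hX30 X₁ hs1
  rw [hc1] at hB2l hB2h hB3l hB3h
  set B1 := X₁.filter (fun x => ((X₂.filter (G.Adj x)).card : ℝ) ≤ (d12 - ε) * X₂.card) with hB1d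
  set B2 := X₁.filter (fun x => (d12 + ε) * X₂.card ≤ ((X₂.filter (G.Adj x)).card : ℝ)) with hB2d
  set B3 := X₁.filter (fun x => ((X₃.filter (G.Adj x)).card : ℝ) ≤ (d13 - ε) * X₃.card) with hB3d
  set B4 := X₁.filter (fun x => (d13 + ε) * X₃.card ≤ ((X₃.filter (G.Adj x)).card : ℝ)) with hB4d
  set Bad : Finset V := B1 ∪ B2 ∪ B3 ∪ B4 with hBadDef
  have hBadsub : Bad ⊆ X₁ := by
    rw [hBadDef, hB1d, hB2d, hB3d, hB4d]
    refine union_subset (union_subset (union_subset ?_ ?_) ?_) ?_ <;> exact filter_subset _ _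
  have hBadcard : (Bad.card : ℝ) ≤ 4 * (ε * n) := by
    have c1 : (Bad.card : ℝ) ≤ ((B1 ∪ B2 ∪ B3).card : ℝ) + B4.card := by
      exact_mod_cast card_union_le _ _
    have c2 : ((B1 ∪ B2 ∪ B3).card : ℝ) ≤ ((B1 ∪ B2).card : ℝ) + B3.card := by
      exact_mod_cast card_union_le _ _
    have c3 : ((B1 ∪ B2).card : ℝ) ≤ (B1.card : ℝ) + B2.card := by
      exact_mod_cast card_union_le _ _
    linarith
  -- Step C: per-vertex product bounds
  have hgood : ∀ x ∈ X₁ \ Bad,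
      |((X₂.filter (G.Adj x)).card : ℝ) * ((X₃.filter (G.Adj x)).card : ℝ)
        - d12 * d13 * ((X₂.card : ℝ) * X₃.card)| ≤ 2 * ε * (n:ℝ)^2 := by
    intro x hx
    rw [mem_sdiff] at hx
    obtain ⟨hx1', hxB⟩ := hx
    rw [hBadDef] at hxB
    simp only [hB1d, hB2d, hB3d, hB4d, mem_union, mem_filter, not_or, not_and, not_le] at hxB
    have k1 : (d12 - ε) * X₂.card < ((X₂.filter (G.Adj x)).card : ℝ) := hxB.1.1.1 hx1'
    have k2 : ((X₂.filter (G.Adj x)).card : ℝ) < (d12 + ε) * X₂.card := hxB.1.1.2 hx1'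
    have k3 : (d13 - ε) * X₃.card < ((X₃.filter (G.Adj x)).card : ℝ) := hxB.1.2 hx1'
    have k4 : ((X₃.filter (G.Adj x)).card : ℝ) < (d13 + ε) * X₃.card := hxB.2 hx1'
    have p1 : (X₂.card : ℝ) * ((X₃.filter (G.Adj x)).card : ℝ) ≤ (n:ℝ)^2 := by
      have := mul_le_mul x2le (hble x) (hb0 x) hn0.le
      linarith only [this]
    have p2 : (X₂.card : ℝ) * X₃.card ≤ (n:ℝ)^2 := by
      have := mul_le_mul x2le x3le x3pos.le hn0.le
      linarith only [this]
    have q1 : ((X₂.filter (G.Adj x)).card : ℝ) * ((X₃.filter (G.Adj x)).card : ℝ)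
        ≤ (d12 + ε) * X₂.card * ((X₃.filter (G.Adj x)).card : ℝ) :=
      mul_le_mul_of_nonneg_right k2.le (hb0 x)
    have q2 : (d12 - ε) * X₂.card * ((X₃.filter (G.Adj x)).card : ℝ)
        ≤ ((X₂.filter (G.Adj x)).card : ℝ) * ((X₃.filter (G.Adj x)).card : ℝ) :=
      mul_le_mul_of_nonneg_right k1.le (hb0 x)
    have hd12x2 : (0:ℝ) ≤ d12 * X₂.card := mul_nonneg (by linarith) x2pos.le
    have q3 : d12 * (X₂.card : ℝ) * ((X₃.filter (G.Adj x)).card : ℝ)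
        ≤ d12 * X₂.card * ((d13 + ε) * X₃.card) :=
      mul_le_mul_of_nonneg_left k4.le hd12x2
    have q4 : d12 * (X₂.card : ℝ) * ((d13 - ε) * X₃.card)
        ≤ d12 * X₂.card * ((X₃.filter (G.Adj x)).card : ℝ) :=
      mul_le_mul_of_nonneg_left k3.le hd12x2
    have r1 := mul_le_mul_of_nonneg_left p1 hε.le
    have r2 : d12 * ((X₂.card : ℝ) * X₃.card) ≤ (n:ℝ)^2 := by
      have := mul_le_mul hd12 p2 (mul_nonneg x2pos.le x3pos.le) zero_le_one
      linarith only [this]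
    have r3 := mul_le_mul_of_nonneg_left r2 hε.le
    rw [abs_le]
    constructor <;> linarith only [q1, q2, q3, q4, r1, r3]
  have hall : ∀ x ∈ X₁,
      |((X₂.filter (G.Adj x)).card : ℝ) * ((X₃.filter (G.Adj x)).card : ℝ)
        - d12 * d13 * ((X₂.card : ℝ) * X₃.card)| ≤ (n:ℝ)^2 := by
    intro x _
    have p2 : (X₂.card : ℝ) * X₃.card ≤ (n:ℝ)^2 := by
      have := mul_le_mul x2le x3le x3pos.le hn0.le
      linarith only [this]
    have p3 : (0:ℝ) ≤ (X₂.card : ℝ) * X₃.card := mul_nonneg x2pos.le x3pos.le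
    have s1 : ((X₂.filter (G.Adj x)).card : ℝ) * ((X₃.filter (G.Adj x)).card : ℝ) ≤ (n:ℝ)^2 := by
      have := mul_le_mul (hale x) (hble x) (hb0 x) hn0.le
      linarith only [this]
    have hdd : d12 * d13 ≤ 1 := by
      nlinarith only [hd12, hd13, h12.le, h13.le, hε.le]
    have hdd0 : (0:ℝ) ≤ d12 * d13 :=
      mul_nonneg (le_of_lt (lt_trans hε h12)) (le_of_lt (lt_trans hε h13))
    have s2 : d12 * d13 * ((X₂.card : ℝ) * X₃.card) ≤ (n:ℝ)^2 := by
      have := mul_le_mul hdd p2 p3 zero_le_one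
      linarith only [this]
    have s3 : (0:ℝ) ≤ d12 * d13 * ((X₂.card : ℝ) * X₃.card) := mul_nonneg hdd0 p3
    rw [abs_le]
    constructor <;> linarith only [s1, s2, s3, mul_nonneg (ha0 x) (hb0 x)]
  -- Step D: claim 2
  have hX1Bn : ((X₁ \ Bad).card : ℝ) ≤ n :=
    le_trans (le_trans (by exact_mod_cast card_le_card sdiff_subset) x1le) le_rfl
  have hclaim2 : |(∑ x ∈ X₁, ((X₂.filter (G.Adj x)).card : ℝ) * ((X₃.filter (G.Adj x)).card : ℝ))
      - d12 * d13 * ((X₁.card : ℝ) * X₂.card * X₃.card)| ≤ 6 * ε * (n:ℝ)^3 := by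
    have hsum : (∑ x ∈ X₁, ((X₂.filter (G.Adj x)).card : ℝ) * ((X₃.filter (G.Adj x)).card : ℝ))
        - d12 * d13 * ((X₁.card : ℝ) * X₂.card * X₃.card)
        = ∑ x ∈ X₁, (((X₂.filter (G.Adj x)).card : ℝ) * ((X₃.filter (G.Adj x)).card : ℝ)
            - d12 * d13 * ((X₂.card : ℝ) * X₃.card)) := by
      rw [sum_sub_distrib, sum_const, nsmul_eq_mul]; ring
    rw [hsum]
    refine le_trans (abs_sum_le_sum_abs _ _) ?_
    rw [← sum_sdiff hBadsub]
    have h1 : ∑ x ∈ X₁ \ Bad, |((X₂.filter (G.Adj x)).card : ℝ) * ((X₃.filter (G.Adj x)).card : ℝ)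
          - d12 * d13 * ((X₂.card : ℝ) * X₃.card)|
        ≤ ((X₁ \ Bad).card : ℝ) * (2 * ε * (n:ℝ)^2) := by
      refine le_trans (sum_le_sum hgood) ?_
      rw [sum_const, nsmul_eq_mul]
    have h2 : ∑ x ∈ Bad, |((X₂.filter (G.Adj x)).card : ℝ) * ((X₃.filter (G.Adj x)).card : ℝ)
          - d12 * d13 * ((X₂.card : ℝ) * X₃.card)|
        ≤ (Bad.card : ℝ) * (n:ℝ)^2 := by
      refine le_trans (sum_le_sum (fun x hx => hall x (hBadsub hx))) ?_
      rw [sum_const, nsmul_eq_mul]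
    have e1 : ((X₁ \ Bad).card : ℝ) * (2 * ε * (n:ℝ)^2) ≤ (n:ℝ) * (2 * ε * (n:ℝ)^2) :=
      mul_le_mul_of_nonneg_right hX1Bn (by positivity)
    have e2 : (Bad.card : ℝ) * (n:ℝ)^2 ≤ 4 * (ε * n) * (n:ℝ)^2 :=
      mul_le_mul_of_nonneg_right hBadcard (by positivity)
    linarith
  -- Step E: claim 1
  have hclaim1 : |(∑ x ∈ X₁, (edgeCount G (X₂.filter (G.Adj x)) (X₃.filter (G.Adj x)) : ℝ))
      - d23 * ∑ x ∈ X₁, ((X₂.filter (G.Adj x)).card : ℝ) * ((X₃.filter (G.Adj x)).card : ℝ)|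
      ≤ ε * (n:ℝ)^3 := by
    rw [mul_sum, ← sum_sub_distrib]
    refine le_trans (abs_sum_le_sum_abs _ _) ?_
    refine le_trans (sum_le_sum hEC) ?_
    rw [sum_const, nsmul_eq_mul]
    calc (X₁.card : ℝ) * (ε * (n:ℝ)^2) ≤ (n:ℝ) * (ε * (n:ℝ)^2) :=
          mul_le_mul_of_nonneg_right x1le (by positivity)
      _ = ε * (n:ℝ)^3 := by ring
  -- Assemble
  have hTR : (((X₁ ×ˢ X₂ ×ˢ X₃).filter
      (fun p => G.Adj p.1 p.2.1 ∧ G.Adj p.1 p.2.2 ∧ G.Adj p.2.1 p.2.2)).card : ℝ)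
      = ∑ x ∈ X₁, (edgeCount G (X₂.filter (G.Adj x)) (X₃.filter (G.Adj x)) : ℝ) := by
    rw [triangle_count_eq]; push_cast; rfl
  rw [hTR]
  have htri := abs_sub_le
    (∑ x ∈ X₁, (edgeCount G (X₂.filter (G.Adj x)) (X₃.filter (G.Adj x)) : ℝ))
    (d23 * ∑ x ∈ X₁, ((X₂.filter (G.Adj x)).card : ℝ) * ((X₃.filter (G.Adj x)).card : ℝ))
    (d12 * d13 * d23 * (X₁.card : ℝ) * (X₂.card : ℝ) * (X₃.card : ℝ))
  have hlast : |d23 * (∑ x ∈ X₁, ((X₂.filter (G.Adj x)).card : ℝ) * ((X₃.filter (G.Adj x)).card : ℝ))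
      - d12 * d13 * d23 * (X₁.card : ℝ) * (X₂.card : ℝ) * (X₃.card : ℝ)|
      ≤ 6 * ε * (n:ℝ)^3 := by
    have heq : d23 * (∑ x ∈ X₁, ((X₂.filter (G.Adj x)).card : ℝ) * ((X₃.filter (G.Adj x)).card : ℝ))
        - d12 * d13 * d23 * (X₁.card : ℝ) * (X₂.card : ℝ) * (X₃.card : ℝ)
        = d23 * ((∑ x ∈ X₁, ((X₂.filter (G.Adj x)).card : ℝ) * ((X₃.filter (G.Adj x)).card : ℝ))
            - d12 * d13 * ((X₁.card : ℝ) * X₂.card * X₃.card)) := by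
      ring
    rw [heq, abs_mul, abs_of_pos (lt_trans hε h23)]
    calc d23 * |(∑ x ∈ X₁, ((X₂.filter (G.Adj x)).card : ℝ) * ((X₃.filter (G.Adj x)).card : ℝ))
          - d12 * d13 * ((X₁.card : ℝ) * X₂.card * X₃.card)|
        ≤ 1 * (6 * ε * (n:ℝ)^3) := mul_le_mul hd23 hclaim2 (abs_nonneg _) zero_le_one
      _ = 6 * ε * (n:ℝ)^3 := one_mul _
  have hfin : (0:ℝ) ≤ ε * (n:ℝ)^3 := by positivity
  linarith [htri, hclaim1, hlast]
end

section
/- For all β > 0 there is β' > 0 (one may take β' = β⁴/2000 for β < 1/10) such that the following holds for every finite nonempty set S and every random variable X with values in S. If h(X) ≥ log|S| - β', then, setting a = 1/|S| and J = {x ∈ S : (1-β)·a ≤ P[X=x] ≤ (1+β)·a}, one has |J| ≥ (1-β)|S| and P[X ∈ J] ≥ 1 - β. -/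
set_option maxHeartbeats 1000000

open Finset

/-- The distribution of a random variable `X` on a finite probability space with
weights `P`. -/
noncomputable def distOf {Ω S : Type*} [Fintype Ω] [DecidableEq S]
    (P : Ω → ℝ) (X : Ω → S) (x : S) : ℝ :=
  ∑ ω ∈ Finset.univ.filter (fun ω => X ω = x), P ω

/-- The Shannon entropy (natural logarithm) of a random variable `X`. -/
noncomputable def entropyOf {Ω S : Type*} [Fintype Ω] [Fintype S] [DecidableEq S]
    (P : Ω → ℝ) (X : Ω → S) : ℝ :=
  ∑ x : S, Real.negMulLog (distOf P X x)

lemma log_ge_aux (t : ℝ) (ht : 0 < t) : 2 * (1 - 1 / Real.sqrt t) ≤ Real.log t := by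
  have hs : 0 < Real.sqrt t := Real.sqrt_pos.2 ht
  have h1 : Real.log (Real.sqrt t)⁻¹ ≤ (Real.sqrt t)⁻¹ - 1 :=
    Real.log_le_sub_one_of_pos (by positivity)
  rw [Real.log_inv, Real.log_sqrt ht.le] at h1
  rw [one_div]
  linarith

lemma sqt_lb (t : ℝ) (ht : 0 < t) : (Real.sqrt t - 1)^2 ≤ t * Real.log t - t + 1 := by
  have hs : 0 < Real.sqrt t := Real.sqrt_pos.2 ht
  have h1 := log_ge_aux t ht
  have h2 : Real.sqrt t * Real.sqrt t = t := Real.mul_self_sqrt ht.le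
  have h3 : t * (2 * (1 - 1 / Real.sqrt t)) ≤ t * Real.log t :=
    mul_le_mul_of_nonneg_left h1 ht.le
  have h4 : t * (1 / Real.sqrt t) = Real.sqrt t := by
    field_simp
    rw [Real.sq_sqrt ht.le]
  nlinarith

lemma f_nonneg (t : ℝ) (ht : 0 ≤ t) : 0 ≤ t * Real.log t - t + 1 := by
  rcases ht.eq_or_lt with h | h
  · simp [← h]
  · nlinarith [sqt_lb t h, sq_nonneg (Real.sqrt t - 1)]

lemma f_low (γ t : ℝ) (hγ : 0 < γ) (hγ1 : γ ≤ 1) (ht : 0 ≤ t) (h : t ≤ 1 - γ) :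
    γ^2 / 25 ≤ t * Real.log t - t + 1 := by
  rcases ht.eq_or_lt with h0 | h0
  · simp [← h0]; nlinarith
  · have h1 := sqt_lb t h0
    have hs : Real.sqrt t ≤ 1 - γ / 2 := by
      rw [show (1 - γ / 2) = Real.sqrt ((1 - γ / 2)^2) from (Real.sqrt_sq (by linarith)).symm]
      exact Real.sqrt_le_sqrt (by nlinarith)
    nlinarith [Real.sqrt_nonneg t]

lemma f_high (γ t : ℝ) (hγ : 0 < γ) (hγ1 : γ ≤ 1) (h : 1 + γ ≤ t) :
    γ^2 / 25 * t ≤ t * Real.log t - t + 1 := by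
  have ht : (0:ℝ) < t := by linarith
  have h1 := sqt_lb t ht
  have h2 : Real.sqrt t * Real.sqrt t = t := Real.mul_self_sqrt ht.le
  have hs : 1 + γ / 4 ≤ Real.sqrt t := by
    rw [show (1 + γ / 4) = Real.sqrt ((1 + γ / 4)^2) from (Real.sqrt_sq (by linarith)).symm]
    exact Real.sqrt_le_sqrt (by nlinarith)
  have hu : γ / 5 * Real.sqrt t ≤ Real.sqrt t - 1 := by nlinarith
  have hu0 : 0 ≤ γ / 5 * Real.sqrt t := by positivity
  have hsq : (γ / 5 * Real.sqrt t) * (γ / 5 * Real.sqrt t) ≤ (Real.sqrt t - 1) * (Real.sqrt t - 1) :=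
    mul_le_mul hu hu hu0 (by linarith)
  nlinarith [Real.sqrt_nonneg t]

/-- The relative-entropy term of a single probability `q` against the uniform
weight `a = 1/n`. -/
noncomputable def Dterm (a q : ℝ) : ℝ :=
  a * ((q / a) * Real.log (q / a) - q / a + 1)

lemma Dterm_nonneg {a q : ℝ} (ha : 0 < a) (hq : 0 ≤ q) : 0 ≤ Dterm a q :=
  mul_nonneg ha.le (f_nonneg _ (by positivity))

lemma Dterm_eq {a q : ℝ} (ha : 0 < a) (hq : 0 ≤ q) :
    Dterm a q = q * Real.log q - Real.log a * q - q + a := by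
  rcases hq.eq_or_lt with h0 | h0
  · rw [Dterm, ← h0]
    simp
  · rw [Dterm, div_eq_mul_inv, Real.log_mul (ne_of_gt h0) (by positivity),
      Real.log_inv]
    field_simp
    ring

lemma core {β γ : ℝ} (hβ : 0 < β) (hγ0 : 0 < γ) (hγ1 : γ ≤ 1) (hγβ : γ ≤ β)
    {S : Type*} [Fintype S] [DecidableEq S] (hS : Nonempty S)
    (p : S → ℝ) (hp0 : ∀ x, 0 ≤ p x) (hpsum : ∑ x, p x = 1)
    (hent : Real.log (Fintype.card S) - γ^3/50 ≤ ∑ x, Real.negMulLog (p x)) :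
    ((1 - β) * (Fintype.card S : ℝ) ≤
        ((Finset.univ.filter (fun x : S =>
          (1 - β) * (1 / (Fintype.card S : ℝ)) ≤ p x ∧
            p x ≤ (1 + β) * (1 / (Fintype.card S : ℝ)))).card : ℝ)) ∧
    (1 - β ≤ ∑ x ∈ Finset.univ.filter (fun x : S =>
        (1 - β) * (1 / (Fintype.card S : ℝ)) ≤ p x ∧
          p x ≤ (1 + β) * (1 / (Fintype.card S : ℝ))), p x) := by
  classical
  have hn0 : 0 < Fintype.card S := Fintype.card_pos
  set nR : ℝ := (Fintype.card S : ℝ) with hnRdef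
  have hnR : (0:ℝ) < nR := by rw [hnRdef]; exact_mod_cast hn0
  have ha0 : (0:ℝ) < 1 / nR := by positivity
  have hloga : Real.log (1 / nR) = - Real.log nR := by
    rw [one_div, Real.log_inv]
  -- total divergence bound
  have hDsum : ∑ x, Dterm (1 / nR) (p x) ≤ γ^3/50 := by
    have expand : ∑ x, Dterm (1 / nR) (p x)
        = (∑ x, p x * Real.log (p x)) - Real.log (1 / nR) * (∑ x, p x)
            - (∑ x, p x) + (Fintype.card S) * (1 / nR) := by
      rw [Finset.sum_congr rfl fun x _ => Dterm_eq ha0 (hp0 x)]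
      rw [Finset.sum_add_distrib, Finset.sum_sub_distrib, Finset.sum_sub_distrib,
        ← Finset.mul_sum, Finset.sum_const, Finset.card_univ, nsmul_eq_mul]
    have hent2 : ∑ x, p x * Real.log (p x) = - ∑ x, Real.negMulLog (p x) := by
      simp [Real.negMulLog]
    have hna : (Fintype.card S : ℝ) * (1 / nR) = 1 := by
      rw [← hnRdef]
      field_simp
    rw [expand, hent2, hpsum, hloga, hna]
    linarith [hent]
  -- pointwise bound on bad points
  have hbad : ∀ x : S, ¬((1 - β) * (1 / nR) ≤ p x ∧ p x ≤ (1 + β) * (1 / nR)) →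
      γ^2 / 25 * (1 / nR) ≤ Dterm (1 / nR) (p x) ∧
        γ^2 / 25 * p x ≤ Dterm (1 / nR) (p x) := by
    intro x hx
    rw [not_and_or, not_le, not_le] at hx
    have hq0 := hp0 x
    have ht0 : 0 ≤ p x / (1 / nR) := by positivity
    have hteq : p x / (1 / nR) = p x * nR := by field_simp
    have hone : (1 / nR) * nR = 1 := by field_simp
    rcases hx with hx | hx
    · have h1 : p x / (1 / nR) ≤ 1 - γ := by
        rw [hteq]
        nlinarith [mul_lt_mul_of_pos_right hx hnR]
      have hf := f_low γ _ hγ0 hγ1 ht0 h1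
      have hDx : (1 / nR) * (γ^2/25) ≤ Dterm (1 / nR) (p x) :=
        mul_le_mul_of_nonneg_left hf ha0.le
      have hpa : p x ≤ 1 / nR := by nlinarith [mul_nonneg hβ.le ha0.le]
      constructor
      · linarith
      · nlinarith [mul_nonneg (sq_nonneg γ) (by linarith : (0:ℝ) ≤ 1 / nR - p x)]
    · have h1 : 1 + γ ≤ p x / (1 / nR) := by
        rw [hteq]
        nlinarith [mul_lt_mul_of_pos_right hx hnR]
      have hf := f_high γ _ hγ0 hγ1 h1
      have hDx : (1 / nR) * (γ^2/25 * (p x / (1 / nR))) ≤ Dterm (1 / nR) (p x) :=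
        mul_le_mul_of_nonneg_left hf ha0.le
      have heq : (1 / nR) * (γ^2/25 * (p x / (1 / nR))) = γ^2/25 * p x := by
        field_simp
      rw [heq] at hDx
      have hpa : 1 / nR ≤ p x := by nlinarith [mul_nonneg hβ.le ha0.le]
      constructor
      · nlinarith [mul_nonneg (sq_nonneg γ) (by linarith : (0:ℝ) ≤ p x - 1 / nR)]
      · exact hDx
  have hcard : (Finset.univ.filter (fun x : S =>
        (1 - β) * (1 / nR) ≤ p x ∧ p x ≤ (1 + β) * (1 / nR))).card
      + (Finset.univ.filter (fun x : S =>
        ¬((1 - β) * (1 / nR) ≤ p x ∧ p x ≤ (1 + β) * (1 / nR)))).card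
      = Fintype.card S :=
    (Finset.card_filter_add_card_filter_not _).trans Finset.card_univ
  have hsplit : (∑ x ∈ Finset.univ.filter (fun x : S =>
        (1 - β) * (1 / nR) ≤ p x ∧ p x ≤ (1 + β) * (1 / nR)), p x)
      + (∑ x ∈ Finset.univ.filter (fun x : S =>
        ¬((1 - β) * (1 / nR) ≤ p x ∧ p x ≤ (1 + β) * (1 / nR))), p x) = 1 :=
    (Finset.sum_filter_add_sum_filter_not _ _ _).trans hpsum
  set Bad := Finset.univ.filter (fun x : S =>
      ¬((1 - β) * (1 / nR) ≤ p x ∧ p x ≤ (1 + β) * (1 / nR))) with hBadDef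
  have hDbad : ∑ x ∈ Bad, Dterm (1 / nR) (p x) ≤ γ^3/50 :=
    le_trans (Finset.sum_le_sum_of_subset_of_nonneg (Finset.subset_univ _)
      (fun x _ _ => Dterm_nonneg ha0 (hp0 x))) hDsum
  have h1 : γ^2/25 * (1 / nR) * Bad.card ≤ γ^3/50 := by
    calc γ^2/25 * (1 / nR) * Bad.card = ∑ _x ∈ Bad, γ^2/25 * (1 / nR) := by
          rw [Finset.sum_const, nsmul_eq_mul]; ring
      _ ≤ ∑ x ∈ Bad, Dterm (1 / nR) (p x) := Finset.sum_le_sum fun x hx =>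
          (hbad x (Finset.mem_filter.1 hx).2).1
      _ ≤ γ^3/50 := hDbad
  have h2 : γ^2/25 * ∑ x ∈ Bad, p x ≤ γ^3/50 := by
    rw [Finset.mul_sum]
    exact le_trans (Finset.sum_le_sum fun x hx =>
      (hbad x (Finset.mem_filter.1 hx).2).2) hDbad
  have hone : (1 / nR) * nR = 1 := by field_simp
  have hBc : (Bad.card : ℝ) ≤ γ/2 * nR := by
    have hb0 : (0:ℝ) ≤ Bad.card := Nat.cast_nonneg _
    have hmul : γ^2/25 * (Bad.card : ℝ) ≤ γ^3/50 * nR := by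
      have h3 := mul_le_mul_of_nonneg_right h1 hnR.le
      rw [show γ^2/25 * (1/nR) * (Bad.card : ℝ) * nR
          = γ^2/25 * (Bad.card : ℝ) * ((1/nR) * nR) from by ring, hone, mul_one] at h3
      exact h3
    nlinarith [mul_pos hγ0 hγ0]
  have hBp : ∑ x ∈ Bad, p x ≤ γ/2 := by
    nlinarith [mul_pos hγ0 hγ0]
  have hcardR : ((Finset.univ.filter (fun x : S =>
        (1 - β) * (1 / nR) ≤ p x ∧ p x ≤ (1 + β) * (1 / nR))).card : ℝ)
      + (Bad.card : ℝ) = nR := by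
    rw [hnRdef]
    exact_mod_cast hcard
  constructor
  · nlinarith [mul_nonneg (by linarith : (0:ℝ) ≤ β - γ) hnR.le]
  · linarith

/-- Stability for maximal entropy: if the entropy of `X` is within `β'` of
`log |S|`, then the distribution of `X` is within a factor `1 ± β` of uniform on
all but a `β`-fraction of `S`, and the exceptional values carry probability at
most `β`. -/
theorem almost_maximal_entropy {β : ℝ} (hβ : 0 < β) :
    ∃ β' : ℝ, 0 < β' ∧
      ∀ (Ω S : Type) [Fintype Ω] [Fintype S] [DecidableEq S], Nonempty S →
        ∀ (P : Ω → ℝ), (∀ ω, 0 ≤ P ω) → (∑ ω, P ω = 1) →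
        ∀ X : Ω → S,
          Real.log (Fintype.card S) - β' ≤ entropyOf P X →
          ((1 - β) * (Fintype.card S : ℝ) ≤
              ((Finset.univ.filter (fun x : S =>
                (1 - β) * (1 / (Fintype.card S : ℝ)) ≤ distOf P X x ∧
                  distOf P X x ≤ (1 + β) * (1 / (Fintype.card S : ℝ)))).card : ℝ)) ∧
          (1 - β ≤ ∑ x ∈ Finset.univ.filter (fun x : S =>
              (1 - β) * (1 / (Fintype.card S : ℝ)) ≤ distOf P X x ∧
                distOf P X x ≤ (1 + β) * (1 / (Fintype.card S : ℝ))),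
              distOf P X x) := by
  have hγ0 : 0 < min β 1 := lt_min hβ one_pos
  refine ⟨(min β 1)^3 / 50, by positivity, ?_⟩
  intro Ω S _ _ _ hS P hP hsum X hent
  have hp0 : ∀ x, 0 ≤ distOf P X x := fun x => Finset.sum_nonneg fun ω _ => hP ω
  have hpsum : ∑ x, distOf P X x = 1 := by
    rw [← hsum]
    exact Finset.sum_fiberwise_of_maps_to (fun ω _ => Finset.mem_univ (X ω)) P
  exact core hβ hγ0 (min_le_right _ _) (min_le_left _ _) hS
    (distOf P X) hp0 hpsum hent
end

section
/- For n ∈ ℕ divisible by k ≥ 2, let G be the complete n-vertex graph with all edges inside a fixed set I of size n/k + 1 removed (so I is an independent set and every vertex of I is adjacent to all vertices outside I). Then δ(G) = (k-1)/k·n - 1 and G has no fractional K_k-factor. -/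
open Finset

lemma swap_sum {V : Type*} [Fintype V] [DecidableEq V]
    (C : Finset (Finset V)) (A : Finset V) (ω : Finset V → ℝ) :
    ∑ u ∈ A, ∑ s ∈ C.filter (fun s => u ∈ s), ω s
      = ∑ s ∈ C, ((s ∩ A).card : ℝ) * ω s := by
  simp_rw [Finset.sum_filter]
  rw [Finset.sum_comm]
  refine Finset.sum_congr rfl fun s _ => ?_
  rw [← Finset.sum_filter, Finset.sum_const, Finset.filter_mem_eq_inter,
    Finset.inter_comm]
  simp [mul_comm]

/-- The extremal example for fractional `K_k`-factors: the complete `n`-vertex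
graph with all edges inside a fixed set `I` of size `n/k + 1` removed has
minimum degree `(k-1)/k·n - 1 = n - n/k - 1` and no fractional `K_k`-factor. -/
theorem extremal_graph_no_fractional_factor
    {V : Type*} [Fintype V] [DecidableEq V] {n k : ℕ} (hk : 2 ≤ k) (hdvd : k ∣ n)
    (hcard : Fintype.card V = n)
    (I : Finset V) (hI : I.card = n / k + 1)
    (G : SimpleGraph V) [DecidableRel G.Adj]
    (hadj : ∀ u v : V, G.Adj u v ↔ u ≠ v ∧ ¬(u ∈ I ∧ v ∈ I)) :
    G.minDegree = n - n / k - 1 ∧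
    ¬ ∃ ω : Finset V → ℝ, (∀ s, 0 ≤ ω s) ∧
        ∀ u : V, ∑ s ∈ (G.cliqueFinset k).filter (fun s => u ∈ s), ω s = 1 := by
  have hIle : n / k + 1 ≤ n := by
    rw [← hI, ← hcard]; exact Finset.card_le_card (Finset.subset_univ I)
  have hInonempty : I.Nonempty := by
    rw [← Finset.card_pos, hI]; exact Nat.succ_pos _
  obtain ⟨v0, hv0⟩ := hInonempty
  have hne : Nonempty V := ⟨v0⟩
  -- degree of a vertex in I
  have hdegI : ∀ v ∈ I, G.degree v = n - n / k - 1 := by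
    intro v hv
    have : G.neighborFinset v = Iᶜ := by
      ext u
      simp only [SimpleGraph.mem_neighborFinset, hadj, Finset.mem_compl]
      constructor
      · rintro ⟨hvu, h⟩ hu; exact h ⟨hv, hu⟩
      · intro hu; exact ⟨fun h => hu (h ▸ hv), fun h => hu h.2⟩
    rw [SimpleGraph.degree, this, Finset.card_compl, hI, hcard]
    omega
  have hdeg_ge : ∀ v : V, n - n / k - 1 ≤ G.degree v := by
    intro v
    by_cases hv : v ∈ I
    · rw [hdegI v hv]
    · have : G.neighborFinset v = {v}ᶜ := by
        ext u
        simp only [SimpleGraph.mem_neighborFinset, hadj, Finset.mem_compl,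
          Finset.mem_singleton]
        constructor
        · rintro ⟨h1, _⟩ h; exact h1 (h ▸ rfl)
        · intro h; exact ⟨fun h' => h h'.symm, fun h' => hv h'.1⟩
      rw [SimpleGraph.degree, this, Finset.card_compl, Finset.card_singleton, hcard]
      exact Nat.sub_le_sub_right (Nat.sub_le n _) 1
  constructor
  · apply le_antisymm
    · rw [← hdegI v0 hv0]; exact G.minDegree_le_degree v0
    · obtain ⟨u, hu⟩ := G.exists_minimal_degree_vertex
      rw [hu]; exact hdeg_ge u
  · rintro ⟨ω, hω0, hωsum⟩
    -- total weight T
    set T : ℝ := ∑ s ∈ G.cliqueFinset k, ω s with hT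
    -- each clique has at most one vertex of I
    have hcap : ∀ s ∈ G.cliqueFinset k, (s ∩ I).card ≤ 1 := by
      intro s hs
      rw [SimpleGraph.mem_cliqueFinset_iff] at hs
      rw [Finset.card_le_one]
      intro a ha b hb
      simp only [Finset.mem_inter] at ha hb
      by_contra hab
      have := hs.1 ha.1 hb.1 hab
      rw [hadj] at this
      exact this.2 ⟨ha.2, hb.2⟩
    -- identity (a): n = k * T
    have ha : (n : ℝ) = (k : ℝ) * T := by
      have h1 : ∑ u : V, ∑ s ∈ (G.cliqueFinset k).filter (fun s => u ∈ s), ω s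
          = (n : ℝ) := by
        simp_rw [hωsum]; simp [hcard]
      rw [swap_sum] at h1
      rw [← h1, Finset.mul_sum]
      refine Finset.sum_congr rfl fun s hs => ?_
      rw [SimpleGraph.mem_cliqueFinset_iff] at hs
      rw [Finset.inter_univ, hs.2]
    -- inequality (b): |I| ≤ T
    have hb : ((n / k : ℕ) : ℝ) + 1 ≤ T := by
      have h1 : ∑ u ∈ I, ∑ s ∈ (G.cliqueFinset k).filter (fun s => u ∈ s), ω s
          = ((n / k : ℕ) : ℝ) + 1 := by
        simp_rw [hωsum]
        simp [hI]
      rw [swap_sum] at h1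
      rw [← h1]
      refine Finset.sum_le_sum fun s hs => ?_
      calc ((s ∩ I).card : ℝ) * ω s ≤ 1 * ω s := by
            apply mul_le_mul_of_nonneg_right _ (hω0 s)
            exact_mod_cast hcap s hs
        _ = ω s := one_mul _
    have hkn : (k : ℝ) * ((n / k : ℕ) : ℝ) = (n : ℝ) := by
      rw [← Nat.cast_mul, Nat.mul_div_cancel' hdvd]
    have hk0 : (0 : ℝ) < k := by positivity
    nlinarith [mul_le_mul_of_nonneg_left hb (le_of_lt hk0)]
end

section
/- Let m ≥ 1 and n = 3m ∈ 3ℕ. Let G be the graph on vertex set X ∪ Y ∪ Z with |X| = m+2, |Y| = |Z| = m-1, containing all edges between distinct parts (complete tripartite) together with the edges of a cycle C of length m+2 on X. Then every triangle factor of G contains at least 2 edges of C. Consequently G contains at most ⌊(m+2)/2⌋ pairwise edge-disjoint triangle factors. -/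
open Finset

/-- Vertex set of the construction: a part `X` of size `m+2` and parts `Y`, `Z`
of size `m-1` each. -/
abbrev TriVert (m : ℕ) := Fin (m + 2) ⊕ (Fin (m - 1) ⊕ Fin (m - 1))

/-- The part (0 for `X`, 1 for `Y`, 2 for `Z`) of a vertex. -/
def part3 {m : ℕ} : TriVert m → Fin 3 :=
  Sum.elim (fun _ => 0) (Sum.elim (fun _ => 1) (fun _ => 2))

/-- Adjacency along the cycle `C` of length `m+2` on `Fin (m+2)`. -/
def cycAdj {m : ℕ} (i j : Fin (m + 2)) : Prop := i ≠ j ∧ (j = i + 1 ∨ i = j + 1)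

/-- `F` is a triangle factor of `G`: a set of pairwise vertex-disjoint triangles
covering all vertices. -/
def IsTriangleFactor {V : Type*} [Fintype V] [DecidableEq V] (G : SimpleGraph V)
    (F : Finset (Finset V)) : Prop :=
  (∀ s ∈ F, G.IsNClique 3 s) ∧ (∀ s ∈ F, ∀ t ∈ F, s ≠ t → Disjoint s t) ∧
    F.biUnion id = Finset.univ

section Aux

variable {m : ℕ}

lemma aux_ne_add_one (i : Fin (m+2)) : i ≠ i + 1 := by
  intro h
  exact one_ne_zero (left_eq_add.mp h)

lemma aux_ne_add_two (hm : 1 ≤ m) (i : Fin (m+2)) : i ≠ i + 2 := by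
  intro h
  have h1 : (2 : Fin (m+2)) = 0 := left_eq_add.mp h
  have := congrArg Fin.val h1
  have h2 : ((2 : Fin (m+2)) : ℕ) = 2 % (m+2) := rfl
  have h3 : 2 % (m+2) = 2 := Nat.mod_eq_of_lt (by omega)
  simp [h2, h3] at this

lemma aux_part0 (v : TriVert m) (h : part3 v = 0) : ∃ i : Fin (m+2), v = Sum.inl i := by
  rcases v with i | (y | z)
  · exact ⟨i, rfl⟩
  · simp [part3] at h
  · simp [part3] at h

lemma aux_pair_inj (hm : 1 ≤ m) {i j : Fin (m+2)}
    (h : ({Sum.inl i, Sum.inl (i+1)} : Finset (TriVert m)) = {Sum.inl j, Sum.inl (j+1)}) :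
    i = j := by
  have hi : (Sum.inl i : TriVert m) ∈ ({Sum.inl j, Sum.inl (j+1)} : Finset (TriVert m)) := by
    rw [← h]; simp
  have hi1 : (Sum.inl (i+1) : TriVert m) ∈ ({Sum.inl j, Sum.inl (j+1)} : Finset (TriVert m)) := by
    rw [← h]; simp
  simp only [mem_insert, mem_singleton, Sum.inl.injEq] at hi hi1
  rcases hi with h1 | h1
  · exact h1
  rcases hi1 with h2 | h2
  · exfalso
    subst h2
    exact aux_ne_add_two hm i (h1.trans (by rw [add_assoc]; rfl))
  · exact add_right_cancel h2

variable (G : SimpleGraph (TriVert m))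
variable (hadj : ∀ u v : TriVert m, G.Adj u v ↔
      (part3 u ≠ part3 v ∨
        ∃ i j : Fin (m + 2), u = Sum.inl i ∧ v = Sum.inl j ∧ cycAdj i j))

include hadj

/-- An edge of the graph inside `X` is a cycle edge (as an unordered pair). -/
lemma aux_edge_of_adj {p q : Fin (m+2)} (h : G.Adj (Sum.inl p) (Sum.inl q)) :
    ∃ k : Fin (m+2), ({Sum.inl k, Sum.inl (k+1)} : Finset (TriVert m)) =
      {Sum.inl p, Sum.inl q} := by
  rw [hadj] at h
  rcases h with h | ⟨i, j, hi, hj, hne, hc⟩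
  · simp [part3] at h
  · cases hi; cases hj
    rcases hc with hc | hc
    · exact ⟨p, by rw [hc]⟩
    · exact ⟨q, by rw [hc, pair_comm]⟩

/-- A triangle with at least two vertices in `X` contains a cycle edge. -/
lemma aux_two_in_X {s : Finset (TriVert m)} (hs : G.IsNClique 3 s)
    (h2 : 2 ≤ (s.filter fun v => part3 v = 0).card) :
    ∃ k : Fin (m+2), Sum.inl k ∈ s ∧ Sum.inl (k+1) ∈ s := by
  obtain ⟨u, hu, v, hv, huv⟩ := Finset.one_lt_card.mp h2
  simp only [mem_filter] at hu hv
  obtain ⟨p, rfl⟩ := aux_part0 u hu.2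
  obtain ⟨q, rfl⟩ := aux_part0 v hv.2
  have hAdj : G.Adj (Sum.inl p) (Sum.inl q) := hs.1 hu.1 hv.1 huv
  obtain ⟨k, hk⟩ := aux_edge_of_adj G hadj hAdj
  have hsub : ({Sum.inl k, Sum.inl (k+1)} : Finset (TriVert m)) ⊆ s := by
    rw [hk]; intro x hx
    simp only [mem_insert, mem_singleton] at hx
    rcases hx with rfl | rfl
    · exact hu.1
    · exact hv.1
  exact ⟨k, hsub (by simp), hsub (by simp)⟩

/-- Every triangle has at least one vertex in X. -/
lemma aux_one_in_X {s : Finset (TriVert m)} (hs : G.IsNClique 3 s) :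
    1 ≤ (s.filter fun v => part3 v = 0).card := by
  classical
  have hcard : s.card = 3 := hs.2
  have hsplit := Finset.card_filter_add_card_filter_not
    (s := s) (p := fun v => part3 v = 0)
  have hle : (s.filter fun v => ¬ part3 v = 0).card ≤ 2 := by
    have : (s.filter fun v => ¬ part3 v = 0).card ≤
        ({1, 2} : Finset (Fin 3)).card := by
      apply Finset.card_le_card_of_injOn part3
      · intro v hv
        simp only [coe_filter, Set.mem_setOf_eq, mem_filter] at hv
        have : ∀ a : Fin 3, a ≠ 0 → a = 1 ∨ a = 2 := by decide
        rcases this _ hv.2 with h | h <;> simp [h]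
      · intro u hu v hv heq
        by_contra hne
        simp only [coe_filter, Set.mem_setOf_eq] at hu hv
        have hAdj : G.Adj u v := hs.1 hu.1 hv.1 hne
        rw [hadj] at hAdj
        rcases hAdj with h | ⟨i, j, rfl, rfl, _⟩
        · exact h heq
        · exact hu.2 rfl
    simpa using this
  omega

end Aux

section Key

variable {m : ℕ}

/-- First conjunct: every triangle factor uses two distinct cycle edges. -/
lemma key_two_edges (hm : 1 ≤ m) (G : SimpleGraph (TriVert m))
    (hadj : ∀ u v : TriVert m, G.Adj u v ↔
      (part3 u ≠ part3 v ∨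
        ∃ i j : Fin (m + 2), u = Sum.inl i ∧ v = Sum.inl j ∧ cycAdj i j))
    (F : Finset (Finset (TriVert m))) (hF : IsTriangleFactor G F) :
    ∃ i j : Fin (m + 2),
        ({Sum.inl i, Sum.inl (i + 1)} : Finset (TriVert m)) ≠
          ({Sum.inl j, Sum.inl (j + 1)} : Finset (TriVert m)) ∧
        (∃ s ∈ F, Sum.inl i ∈ s ∧ Sum.inl (i + 1) ∈ s) ∧
        (∃ s ∈ F, Sum.inl j ∈ s ∧ Sum.inl (j + 1) ∈ s) := by
  classical
  obtain ⟨h1, h2, h3⟩ := hF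
  set x : Finset (TriVert m) → ℕ := fun s => (s.filter fun v => part3 v = 0).card with hxdef
  -- the set X as a finset
  set Xs : Finset (TriVert m) := (univ : Finset (Fin (m+2))).image Sum.inl with hXdef
  have hXmem : ∀ v : TriVert m, v ∈ Xs ↔ part3 v = 0 := by
    intro v
    constructor
    · rintro hv
      simp only [hXdef, mem_image] at hv
      obtain ⟨i, _, rfl⟩ := hv
      rfl
    · intro hv
      obtain ⟨i, rfl⟩ := aux_part0 v hv
      simp [hXdef]
  have hXcard : Xs.card = m + 2 := by
    rw [hXdef, Finset.card_image_of_injective _ Sum.inl_injective, card_univ, Fintype.card_fin]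
  have hfilter : ∀ s : Finset (TriVert m), s.filter (fun v => part3 v = 0) = s ∩ Xs := by
    intro s; ext v; simp [mem_filter, mem_inter, hXmem]
  -- total count of X vertices
  have hsum : ∑ s ∈ F, x s = m + 2 := by
    have hdisj : ∀ s ∈ F, ∀ t ∈ F, s ≠ t → Disjoint (s ∩ Xs) (t ∩ Xs) := by
      intro s hs t ht hst
      exact (h2 s hs t ht hst).mono inter_subset_left inter_subset_left
    calc ∑ s ∈ F, x s = ∑ s ∈ F, (s ∩ Xs).card := by
            simp only [hxdef, hfilter]
      _ = (F.biUnion (fun s => s ∩ Xs)).card := (Finset.card_biUnion hdisj).symm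
      _ = Xs.card := by
            congr 1
            ext v
            simp only [mem_biUnion, mem_inter]
            constructor
            · rintro ⟨s, _, _, hv⟩; exact hv
            · intro hv
              have : v ∈ F.biUnion id := by rw [h3]; exact mem_univ v
              obtain ⟨s, hs, hvs⟩ := mem_biUnion.mp this
              exact ⟨s, hs, hvs, hv⟩
      _ = m + 2 := hXcard
  -- number of triangles
  have hcardV : Fintype.card (TriVert m) = 3 * m := by
    simp only [TriVert, Fintype.card_sum, Fintype.card_fin]
    omega
  have hFcard : F.card = m := by
    have hdisj : ∀ s ∈ F, ∀ t ∈ F, s ≠ t → Disjoint (id s) (id t) := h2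
    have : ∑ s ∈ F, s.card = 3 * m := by
      calc ∑ s ∈ F, s.card = ∑ s ∈ F, (id s).card := rfl
        _ = (F.biUnion id).card := (Finset.card_biUnion hdisj).symm
        _ = (univ : Finset (TriVert m)).card := by rw [h3]
        _ = 3 * m := by rw [card_univ, hcardV]
    have h3each : ∑ s ∈ F, s.card = 3 * F.card := by
      rw [Finset.sum_congr rfl (fun s hs => (h1 s hs).2), Finset.sum_const]
      ring
    omega
  have hx1 : ∀ s ∈ F, 1 ≤ x s := fun s hs => aux_one_in_X G hadj (h1 s hs)
  -- find a triangle with at least 2 X-vertices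
  have hex2 : ∃ s ∈ F, 2 ≤ x s := by
    by_contra hcon
    push_neg at hcon
    have : ∑ s ∈ F, x s ≤ ∑ s ∈ F, 1 := Finset.sum_le_sum (fun s hs => by
      have := hcon s hs; omega)
    rw [hsum, Finset.sum_const, smul_eq_mul, mul_one, hFcard] at this
    omega
  obtain ⟨s0, hs0, hxs0⟩ := hex2
  by_cases h3x : 3 ≤ x s0
  · -- Case A: a triangle fully inside X
    have hcard : s0.card = 3 := (h1 s0 hs0).2
    have hsubf : s0.filter (fun v => part3 v = 0) ⊆ s0 := filter_subset _ _
    have h3x' : 3 ≤ (s0.filter fun v => part3 v = 0).card := h3x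
    have heq : s0.filter (fun v => part3 v = 0) = s0 :=
      Finset.eq_of_subset_of_card_le hsubf (by omega)
    have hall : ∀ v ∈ s0, part3 v = 0 := by
      intro v hv
      rw [← heq] at hv
      exact (mem_filter.mp hv).2
    obtain ⟨a, b, c, hab, hac, hbc, hs0eq⟩ := Finset.card_eq_three.mp hcard
    obtain ⟨p, rfl⟩ := aux_part0 a (hall a (by simp [hs0eq]))
    obtain ⟨q, rfl⟩ := aux_part0 b (hall b (by simp [hs0eq]))
    obtain ⟨r, rfl⟩ := aux_part0 c (hall c (by simp [hs0eq]))
    have hma : (Sum.inl p : TriVert m) ∈ s0 := by simp [hs0eq]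
    have hmb : (Sum.inl q : TriVert m) ∈ s0 := by simp [hs0eq]
    have hmc : (Sum.inl r : TriVert m) ∈ s0 := by simp [hs0eq]
    have hclique := (h1 s0 hs0).1
    obtain ⟨k1, hk1⟩ := aux_edge_of_adj G hadj (hclique hma hmb hab)
    obtain ⟨k2, hk2⟩ := aux_edge_of_adj G hadj (hclique hmb hmc hbc)
    refine ⟨k1, k2, ?_, ?_, ?_⟩
    · intro hk
      rw [hk1, hk2] at hk
      have : (Sum.inl p : TriVert m) ∈ ({Sum.inl q, Sum.inl r} : Finset (TriVert m)) := by
        rw [← hk]; simp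
      simp only [mem_insert, mem_singleton] at this
      rcases this with h | h
      · exact hab h
      · exact hac h
    · refine ⟨s0, hs0, ?_, ?_⟩
      · have : (Sum.inl k1 : TriVert m) ∈ ({Sum.inl p, Sum.inl q} : Finset (TriVert m)) := by
          rw [← hk1]; simp
        simp only [mem_insert, mem_singleton] at this
        rcases this with h | h <;> rw [h]
        · exact hma
        · exact hmb
      · have : (Sum.inl (k1+1) : TriVert m) ∈ ({Sum.inl p, Sum.inl q} : Finset (TriVert m)) := by
          rw [← hk1]; simp
        simp only [mem_insert, mem_singleton] at this
        rcases this with h | h <;> rw [h]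
        · exact hma
        · exact hmb
    · refine ⟨s0, hs0, ?_, ?_⟩
      · have : (Sum.inl k2 : TriVert m) ∈ ({Sum.inl q, Sum.inl r} : Finset (TriVert m)) := by
          rw [← hk2]; simp
        simp only [mem_insert, mem_singleton] at this
        rcases this with h | h <;> rw [h]
        · exact hmb
        · exact hmc
      · have : (Sum.inl (k2+1) : TriVert m) ∈ ({Sum.inl q, Sum.inl r} : Finset (TriVert m)) := by
          rw [← hk2]; simp
        simp only [mem_insert, mem_singleton] at this
        rcases this with h | h <;> rw [h]
        · exact hmb
        · exact hmc
  · -- Case B: two triangles each with exactly 2 X-vertices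
    push_neg at h3x
    have hex2' : ∃ t ∈ F, t ≠ s0 ∧ 2 ≤ x t := by
      by_contra hcon
      push_neg at hcon
      have hsum' : ∑ s ∈ F, x s = x s0 + ∑ s ∈ F.erase s0, x s :=
        (Finset.add_sum_erase F x hs0).symm
      have herase : ∑ s ∈ F.erase s0, x s ≤ (F.erase s0).card := by
        calc ∑ s ∈ F.erase s0, x s ≤ ∑ s ∈ F.erase s0, 1 := by
              apply Finset.sum_le_sum
              intro t ht
              have ht' := Finset.mem_of_mem_erase ht
              have hne := Finset.ne_of_mem_erase ht
              have := hcon t ht' hne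
              omega
          _ = (F.erase s0).card := by simp
      have hec : (F.erase s0).card = m - 1 := by
        rw [Finset.card_erase_of_mem hs0, hFcard]
      omega
    obtain ⟨t, ht, hts0, hxt⟩ := hex2'
    obtain ⟨k1, hk1a, hk1b⟩ := aux_two_in_X G hadj (h1 s0 hs0) hxs0
    obtain ⟨k2, hk2a, hk2b⟩ := aux_two_in_X G hadj (h1 t ht) hxt
    refine ⟨k1, k2, ?_, ⟨s0, hs0, hk1a, hk1b⟩, ⟨t, ht, hk2a, hk2b⟩⟩
    intro hk
    have hdisj := h2 s0 hs0 t ht (Ne.symm hts0)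
    have : (Sum.inl k1 : TriVert m) ∈ t := by
      have : (Sum.inl k1 : TriVert m) ∈ ({Sum.inl k2, Sum.inl (k2+1)} : Finset (TriVert m)) := by
        rw [← hk]; simp
      simp only [mem_insert, mem_singleton] at this
      rcases this with h | h <;> rw [h]
      · exact hk2a
      · exact hk2b
    exact (Finset.disjoint_left.mp hdisj hk1a) this

end Key


/-- In the complete tripartite graph with parts of sizes `m+2, m-1, m-1` plus a
cycle `C` of length `m+2` on the large part, every triangle factor uses at least
two edges of `C`; consequently there are at most `⌊(m+2)/2⌋` pairwise
edge-disjoint triangle factors. -/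
theorem tripartite_plus_cycle_construction (m : ℕ) (hm : 1 ≤ m)
    (G : SimpleGraph (TriVert m))
    (hadj : ∀ u v : TriVert m, G.Adj u v ↔
      (part3 u ≠ part3 v ∨
        ∃ i j : Fin (m + 2), u = Sum.inl i ∧ v = Sum.inl j ∧ cycAdj i j)) :
    (∀ F : Finset (Finset (TriVert m)), IsTriangleFactor G F →
      ∃ i j : Fin (m + 2),
        ({Sum.inl i, Sum.inl (i + 1)} : Finset (TriVert m)) ≠
          ({Sum.inl j, Sum.inl (j + 1)} : Finset (TriVert m)) ∧
        (∃ s ∈ F, Sum.inl i ∈ s ∧ Sum.inl (i + 1) ∈ s) ∧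
        (∃ s ∈ F, Sum.inl j ∈ s ∧ Sum.inl (j + 1) ∈ s)) ∧
    (∀ 𝒻 : Finset (Finset (Finset (TriVert m))),
      (∀ F ∈ 𝒻, IsTriangleFactor G F) →
      (∀ F₁ ∈ 𝒻, ∀ F₂ ∈ 𝒻, F₁ ≠ F₂ →
        ∀ u v : TriVert m, u ≠ v →
          (∃ s ∈ F₁, u ∈ s ∧ v ∈ s) → ¬ ∃ s ∈ F₂, u ∈ s ∧ v ∈ s) →
      𝒻.card ≤ (m + 2) / 2) := by
  classical
  refine ⟨fun F hF => key_two_edges hm G hadj F hF, ?_⟩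
  intro 𝒻 hfac hdisj
  -- the set of cycle edges used by a factor
  set E : Finset (Finset (TriVert m)) → Finset (Finset (TriVert m)) :=
    fun F => ((univ : Finset (Fin (m+2))).filter
        (fun i => ∃ s ∈ F, Sum.inl i ∈ s ∧ Sum.inl (i+1) ∈ s)).image
      (fun i => ({Sum.inl i, Sum.inl (i+1)} : Finset (TriVert m))) with hEdef
  set C : Finset (Finset (TriVert m)) :=
    (univ : Finset (Fin (m+2))).image
      (fun i => ({Sum.inl i, Sum.inl (i+1)} : Finset (TriVert m))) with hCdef
  have hCcard : C.card = m + 2 := by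
    rw [hCdef, Finset.card_image_of_injOn, card_univ, Fintype.card_fin]
    intro i _ j _ h
    exact aux_pair_inj hm h
  have hsub : ∀ F, E F ⊆ C := by
    intro F
    exact Finset.image_subset_image (filter_subset _ _)
  have hcard2 : ∀ F ∈ 𝒻, 2 ≤ (E F).card := by
    intro F hF
    obtain ⟨i, j, hne, hi, hj⟩ := key_two_edges hm G hadj F (hfac F hF)
    apply Finset.one_lt_card.mpr
    refine ⟨_, ?_, _, ?_, hne⟩
    · exact mem_image_of_mem _ (mem_filter.mpr ⟨mem_univ i, hi⟩)
    · exact mem_image_of_mem _ (mem_filter.mpr ⟨mem_univ j, hj⟩)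
  have hdisjE : ∀ F₁ ∈ 𝒻, ∀ F₂ ∈ 𝒻, F₁ ≠ F₂ → Disjoint (E F₁) (E F₂) := by
    intro F₁ hF₁ F₂ hF₂ hne
    rw [Finset.disjoint_left]
    intro e he1 he2
    simp only [hEdef, mem_image, mem_filter, mem_univ, true_and] at he1 he2
    obtain ⟨i, hi, rfl⟩ := he1
    obtain ⟨j, hj, hij⟩ := he2
    have : j = i := aux_pair_inj hm hij
    subst this
    have hneuv : (Sum.inl j : TriVert m) ≠ Sum.inl (j+1) := by
      intro h
      exact aux_ne_add_one j (Sum.inl_injective h)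
    exact hdisj F₁ hF₁ F₂ hF₂ hne (Sum.inl j) (Sum.inl (j+1)) hneuv hi hj
  have hkey : 2 * 𝒻.card ≤ m + 2 := by
    calc 2 * 𝒻.card = ∑ _F ∈ 𝒻, 2 := by rw [Finset.sum_const]; ring
      _ ≤ ∑ F ∈ 𝒻, (E F).card := Finset.sum_le_sum hcard2
      _ = (𝒻.biUnion E).card := (Finset.card_biUnion hdisjE).symm
      _ ≤ C.card := Finset.card_le_card (by
            intro e he
            obtain ⟨F, _, heF⟩ := mem_biUnion.mp he
            exact hsub F heF)
      _ = m + 2 := hCcard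
  omega
end
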